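/- Let X, M be SPD matrices, U a symmetric matrix, and let L = L_{X,M}[U] be the solution of X L M + M L X = U. Then the generalized Bures-Wasserstein exponential X + U + M L X L M equals (I + M L) X (I + L M), and hence is symmetric positive semidefinite; it is positive definite whenever I + M L is invertible (in particular when M + M L M is SPD). -/

import Mathlib

open Matrix

lemma aux_posdef_conj {n : Type*} [Fintype n] [DecidableEq n]
    {X B : Matrix n n ℝ} (hX : X.PosDef) (hB : IsUnit B) :
    (B * X * Bᴴ).PosDef := by
  refine PosDef.of_dotProduct_mulVec_pos (hX.posSemidef.mul_mul_conjTranspose_same B).1 fun x hx => ?_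
  have hBt : Function.Injective (Bᴴ.mulVec) := by
    rw [Matrix.mulVec_injective_iff_isUnit]
    simpa using hB
  have hne : Bᴴ *ᵥ x ≠ 0 := fun h => hx (by simpa using hBt (h.trans (by simp)))
  have := hX.dotProduct_mulVec_pos hne
  simpa only [star_mulVec, dotProduct_mulVec, vecMul_vecMul, conjTranspose_conjTranspose] using this

/-- With L = L_{X,M}[U] the symmetric solution of X L M + M L X = U, the GBW exponential
X + U + M L X L M equals (I + M L) X (I + L M), hence is positive semidefinite; it is
positive definite when I + M L is invertible, in particular when M + M L M is SPD. -/
theorem stmt13 {n : Type*} [Fintype n] [DecidableEq n]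
    (X M U L : Matrix n n ℝ)
    (hX : X.PosDef) (hM : M.PosDef) (hU : Uᵀ = U)
    (hLsym : Lᵀ = L) (hL : X * L * M + M * L * X = U) :
    X + U + M * L * X * L * M = (1 + M * L) * X * (1 + L * M) ∧
    (X + U + M * L * X * L * M).PosSemidef ∧
    (IsUnit (1 + M * L) → (X + U + M * L * X * L * M).PosDef) ∧
    ((M + M * L * M).PosDef → (X + U + M * L * X * L * M).PosDef) := by
  have hMsym : Mᵀ = M := hM.isHermitian.eq
  have heq : X + U + M * L * X * L * M = (1 + M * L) * X * (1 + L * M) := by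
    rw [← hL]; noncomm_ring
  have hconj : (1 + M * L)ᴴ = 1 + L * M := by
    show (1 + M * L)ᵀ = 1 + L * M
    rw [transpose_add, transpose_one, transpose_mul, hMsym, hLsym]
  have hsemi : (X + U + M * L * X * L * M).PosSemidef := by
    rw [heq, ← hconj]
    exact hX.posSemidef.mul_mul_conjTranspose_same _
  have hdef : IsUnit (1 + M * L) → (X + U + M * L * X * L * M).PosDef := fun hu => by
    rw [heq, ← hconj]
    exact aux_posdef_conj hX hu
  refine ⟨heq, hsemi, hdef, fun hP => hdef ?_⟩
  have h1 : M + M * L * M = (1 + M * L) * M := by noncomm_ring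
  have hMu : IsUnit M := hM.isUnit
  have : IsUnit ((1 + M * L) * M) := h1 ▸ hP.isUnit
  rw [Matrix.isUnit_iff_isUnit_det] at this ⊢
  rw [Matrix.det_mul] at this
  exact isUnit_of_mul_isUnit_left this
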